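/- For the rate-1/2 (7,5) convolutional encoder with the Table II mapping P into 3×3 permutation code matrices, every error event has expanded weight at least 16, and the input sequence 1,0,0 (of length 3, with output symbols (1,1), (1,0), (1,1), mapped to the matrices of the words 123, 132, 123) is the unique error event of expanded weight exactly 16. Hence the free distance of the expanded code is d*_free = 16, and the number of minimum-weight error events is a_{16} = 1. -/

import Mathlib

/-- Next state of the rate-1/2 (7,5) convolutional encoder: on input `u` from
state `(s₁, s₂)` the encoder moves to state `(u, s₁)`. -/
def nextState (u : ZMod 2) (s : ZMod 2 × ZMod 2) : ZMod 2 × ZMod 2 :=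
  (u, s.1)

/-- Output symbol of the rate-1/2 (7,5) convolutional encoder: on input `u`
from state `(s₁, s₂)` the encoder outputs `(u + s₁ + s₂, u + s₂)`. -/
def outSym (u : ZMod 2) (s : ZMod 2 × ZMod 2) : ZMod 2 × ZMod 2 :=
  (u + s.1 + s.2, u + s.2)

/-- The sequence of states visited (after each input bit) when feeding the
input list `us` to the encoder started in state `s`. -/
def encStates : ZMod 2 × ZMod 2 → List (ZMod 2) → List (ZMod 2 × ZMod 2)
  | _, [] => []
  | s, u :: us => nextState u s :: encStates (nextState u s) us

/-- The sequence of output symbols produced when feeding the input list `us`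
to the encoder started in state `s`. -/
def encOutputs : ZMod 2 × ZMod 2 → List (ZMod 2) → List (ZMod 2 × ZMod 2)
  | _, [] => []
  | s, u :: us => outSym u s :: encOutputs (nextState u s) us

/-- The Table II mapping `P` from output symbols to 3×3 permutation words:
`(0,0) ↦ 231`, `(0,1) ↦ 213`, `(1,0) ↦ 132`, `(1,1) ↦ 123` (0-indexed, the
word is the function `k ↦ w_k`). -/
def tableP (s : ZMod 2 × ZMod 2) : Fin 3 → Fin 3 :=
  if s = (0, 0) then ![1, 2, 0]
  else if s = (0, 1) then ![1, 0, 2]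
  else if s = (1, 0) then ![0, 2, 1]
  else ![0, 1, 2]

/-- The 3×3 permutation code matrix of an output symbol: entry `(j,k)` is
`true` iff `w_k = j` for the Table II word `w` of the symbol. -/
def Pmat (s : ZMod 2 × ZMod 2) : Fin 3 × Fin 3 → Bool :=
  fun jk => decide (tableP s jk.2 = jk.1)

/-- An error event: a nonempty input sequence beginning with `1` whose state
sequence (from the all-zero state) leaves the all-zero state and returns to it
exactly at the final step. -/
def IsErrorEvent (us : List (ZMod 2)) : Prop :=
  us ≠ [] ∧ us.head? = some 1 ∧
  (∀ s ∈ (encStates (0, 0) us).dropLast, s ≠ ((0 : ZMod 2), (0 : ZMod 2))) ∧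
  (encStates (0, 0) us).getLast? = some (0, 0)

/-- The expanded weight of an input sequence: the sum over its output symbols
`v` of `d_H(P(v), P(0,0))`. -/
def expWeight (us : List (ZMod 2)) : ℕ :=
  ((encOutputs (0, 0) us).map fun v => hammingDist (Pmat v) (Pmat (0, 0))).sum

/-- per-symbol expanded weight -/
def wsym (v : ZMod 2 × ZMod 2) : ℕ := hammingDist (Pmat v) (Pmat (0, 0))

/-- potential: minimum remaining weight to terminate from a nonzero state -/
def phi (s : ZMod 2 × ZMod 2) : ℕ := if s = (0, 1) then 6 else 10

/-- canonical minimum-weight tail from a nonzero state -/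
def canon (s : ZMod 2 × ZMod 2) : List (ZMod 2) :=
  if s = (0, 1) then [0] else [0, 0]

lemma base_step (u : ZMod 2) (s : ZMod 2 × ZMod 2) (hs : s ≠ (0, 0))
    (h : nextState u s = (0, 0)) :
    phi s ≤ wsym (outSym u s) ∧ (wsym (outSym u s) = phi s → [u] = canon s) := by
  revert u s; decide

lemma mid_step (u : ZMod 2) (s : ZMod 2 × ZMod 2) (hs : s ≠ (0, 0))
    (h : nextState u s ≠ (0, 0)) :
    phi s ≤ wsym (outSym u s) + phi (nextState u s) := by
  revert u s; decide

lemma tight_step (u : ZMod 2) (s : ZMod 2 × ZMod 2) (hs : s ≠ (0, 0))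
    (h : nextState u s ≠ (0, 0))
    (he : wsym (outSym u s) + phi (nextState u s) = phi s) :
    u :: canon (nextState u s) = canon s := by
  revert u s; decide

lemma encStates_ne_nil (s : ZMod 2 × ZMod 2) (u : ZMod 2) (us : List (ZMod 2)) :
    encStates s (u :: us) ≠ [] := by
  simp [encStates]

lemma key : ∀ us : List (ZMod 2), ∀ s : ZMod 2 × ZMod 2, s ≠ (0, 0) →
    (∀ x ∈ (encStates s us).dropLast, x ≠ ((0 : ZMod 2), (0 : ZMod 2))) →
    (encStates s us).getLast? = some (0, 0) →
    phi s ≤ ((encOutputs s us).map wsym).sum ∧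
      (((encOutputs s us).map wsym).sum = phi s → us = canon s) := by
  intro us
  induction us with
  | nil => intro s hs _ hlast; simp [encStates] at hlast
  | cons u rest ih =>
    intro s hs hmid hlast
    rcases rest with _ | ⟨u', rest'⟩
    · -- length-one tail
      have h0 : nextState u s = (0, 0) := by
        simpa [encStates] using hlast
      have hsum : ((encOutputs s [u]).map wsym).sum = wsym (outSym u s) := by
        simp [encOutputs]
      rw [hsum]
      exact base_step u s hs h0
    · -- longer tail: use induction hypothesis at the next state
      have hne : encStates (nextState u s) (u' :: rest') ≠ [] := encStates_ne_nil _ _ _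
      have hstates : encStates s (u :: u' :: rest')
          = nextState u s :: encStates (nextState u s) (u' :: rest') := rfl
      have hdrop : (encStates s (u :: u' :: rest')).dropLast
          = nextState u s :: (encStates (nextState u s) (u' :: rest')).dropLast := by
        rw [hstates, List.dropLast_cons_of_ne_nil hne]
      have hs'ne : nextState u s ≠ (0, 0) :=
        hmid _ (by rw [hdrop]; exact List.mem_cons_self)
      have hmid' : ∀ x ∈ (encStates (nextState u s) (u' :: rest')).dropLast,
          x ≠ ((0 : ZMod 2), (0 : ZMod 2)) := fun x hx =>
        hmid x (by rw [hdrop]; exact List.mem_cons_of_mem _ hx)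
      have hlast' : (encStates (nextState u s) (u' :: rest')).getLast? = some (0, 0) := by
        have h2 : encStates (nextState u s) (u' :: rest')
            = nextState u' (nextState u s)
              :: encStates (nextState u' (nextState u s)) rest' := rfl
        rw [hstates, h2, List.getLast?_cons_cons] at hlast
        rw [h2]
        exact hlast
      obtain ⟨hge, hun⟩ := ih (nextState u s) hs'ne hmid' hlast'
      have hsum : ((encOutputs s (u :: u' :: rest')).map wsym).sum
          = wsym (outSym u s)
            + ((encOutputs (nextState u s) (u' :: rest')).map wsym).sum := by
        simp [encOutputs]
      have hstep := mid_step u s hs hs'ne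
      rw [hsum]
      refine ⟨by omega, fun heq => ?_⟩
      have h1 : ((encOutputs (nextState u s) (u' :: rest')).map wsym).sum
          = phi (nextState u s) := by omega
      rw [hun h1]
      exact (tight_step u s hs hs'ne (by omega)).symm ▸ rfl

lemma main_aux (us : List (ZMod 2)) (h : IsErrorEvent us) :
    16 ≤ expWeight us ∧ (expWeight us = 16 → us = [1, 0, 0]) := by
  obtain ⟨hne, hhead, hmid, hlast⟩ := h
  rcases us with _ | ⟨u, rest⟩
  · exact absurd rfl hne
  · have hu : u = 1 := by simpa using hhead
    subst hu
    rcases rest with _ | ⟨u', rest'⟩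
    · exfalso
      have h1 : (encStates (0, 0) [(1 : ZMod 2)]).getLast?
          = some ((1 : ZMod 2), (0 : ZMod 2)) := rfl
      rw [h1] at hlast
      exact absurd (Option.some_injective _ hlast) (by decide)
    · have hne2 : encStates ((1 : ZMod 2), (0 : ZMod 2)) (u' :: rest') ≠ [] :=
        encStates_ne_nil _ _ _
      have hstates : encStates ((0 : ZMod 2), (0 : ZMod 2)) (1 :: u' :: rest')
          = ((1 : ZMod 2), (0 : ZMod 2)) :: encStates (1, 0) (u' :: rest') := rfl
      have hdrop : (encStates ((0 : ZMod 2), (0 : ZMod 2)) (1 :: u' :: rest')).dropLast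
          = ((1 : ZMod 2), (0 : ZMod 2)) :: (encStates (1, 0) (u' :: rest')).dropLast := by
        rw [hstates, List.dropLast_cons_of_ne_nil hne2]
      have hmid' : ∀ x ∈ (encStates ((1 : ZMod 2), (0 : ZMod 2)) (u' :: rest')).dropLast,
          x ≠ ((0 : ZMod 2), (0 : ZMod 2)) := fun x hx =>
        hmid x (by rw [hdrop]; exact List.mem_cons_of_mem _ hx)
      have hlast' : (encStates ((1 : ZMod 2), (0 : ZMod 2)) (u' :: rest')).getLast?
          = some (0, 0) := by
        have h2 : encStates ((1 : ZMod 2), (0 : ZMod 2)) (u' :: rest')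
            = nextState u' (1, 0) :: encStates (nextState u' (1, 0)) rest' := rfl
        rw [hstates, h2, List.getLast?_cons_cons] at hlast
        rw [h2]
        exact hlast
      obtain ⟨hge, hun⟩ := key (u' :: rest') (1, 0) (by decide) hmid' hlast'
      have hphi : phi ((1 : ZMod 2), (0 : ZMod 2)) = 10 := by decide
      have hw : wsym (outSym 1 ((0 : ZMod 2), (0 : ZMod 2))) = 6 := by decide
      have hsum : expWeight (1 :: u' :: rest')
          = wsym (outSym 1 ((0 : ZMod 2), (0 : ZMod 2)))
            + ((encOutputs ((1 : ZMod 2), (0 : ZMod 2)) (u' :: rest')).map wsym).sum := rfl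
      rw [hphi] at hge hun
      constructor
      · omega
      · intro heq
        have h1 : ((encOutputs ((1 : ZMod 2), (0 : ZMod 2)) (u' :: rest')).map wsym).sum
            = 10 := by omega
        have h2 := hun h1
        have h3 : canon ((1 : ZMod 2), (0 : ZMod 2)) = [0, 0] := by decide
        rw [h3] at h2
        rw [h2]

/-- Every error event of the expanded (7,5) permutation trellis code has
expanded weight at least `16`; the input sequence `1,0,0` (with output symbols
`(1,1), (1,0), (1,1)`) is an error event of expanded weight exactly `16` and
is the unique error event of weight `16`. Hence `d*_free = 16` and `a₁₆ = 1`. -/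
theorem stmt_8 :
    (∀ us : List (ZMod 2), IsErrorEvent us → 16 ≤ expWeight us) ∧
    (∀ us : List (ZMod 2), IsErrorEvent us → expWeight us = 16 → us = [1, 0, 0]) ∧
    IsErrorEvent [1, 0, 0] ∧ expWeight [1, 0, 0] = 16 ∧
    encOutputs (0, 0) [1, 0, 0] = [(1, 1), (1, 0), (1, 1)] := by
  refine ⟨fun us h => (main_aux us h).1, fun us h he => (main_aux us h).2 he, ?_, ?_, ?_⟩
  · refine ⟨by decide, by decide, ?_, by decide⟩
    decide
  · decide
  · decide
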